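/- arXiv:2402.08770 — 3 statements merged into one kernel-verified Lean document; each statement's English description precedes it below -/
import Mathlib

section
/- Let S and T be bilateral weighted shifts with positive quasi-invertible uniformly bounded weights (S_i), (T_i). If U = [U_{i,j}] ∈ B(ℓ²(ℤ, H)) is a unitary operator such that US = TU, then U is constant on diagonals: U_{i+1,j+1} = U_{i,j} for all i, j ∈ ℤ. -/
open scoped InnerProductSpace ComplexOrder

set_option synthInstance.maxHeartbeats 400000
set_option maxHeartbeats 1600000

section AuxiliaryLemmas

variable {H : Type*} [NormedAddCommGroup H] [InnerProductSpace ℂ H] [CompleteSpace H]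

lemma commute_cfc_aux (a b : H →L[ℂ] H) (ha : IsSelfAdjoint a) (hab : Commute b a)
    (f : ℝ → ℝ) : Commute b (cfc f a) := by
  by_cases hf : ContinuousOn f (spectrum ℝ a)
  · rw [cfc_apply f a ha hf]
    suffices hall : ∀ g : C(spectrum ℝ a, ℝ), Commute b (cfcHom ha g) from hall _
    intro g
    have hclosed : IsClosed {x : H →L[ℂ] H | Commute b x} := by
      have heq : {x : H →L[ℂ] H | Commute b x} = (fun x => b * x - x * b) ⁻¹' {(0 : H →L[ℂ] H)} := by
        ext x
        simp [Commute, SemiconjBy, sub_eq_zero]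
      rw [heq]
      exact isClosed_singleton.preimage (by fun_prop)
    have hpoly : ∀ p : Polynomial ℝ, Commute b (Polynomial.aeval a p) := by
      intro p
      induction p using Polynomial.induction_on with
      | C c => simpa using Algebra.commute_algebraMap_right c b
      | add p q hp hq => simpa using hp.add_right hq
      | monomial n c hc =>
        simpa [mul_assoc, map_mul] using
          ((Algebra.commute_algebraMap_right c b).mul_right (hab.pow_right (n + 1)))
    have hkey : (cfcHom ha (R := ℝ)).toAlgHom.comp
        (Polynomial.toContinuousMapOnAlgHom (spectrum ℝ a)) = Polynomial.aeval a := by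
      apply Polynomial.algHom_ext
      simpa [Polynomial.toContinuousMapOn_X_eq_restrict_id] using cfcHom_id ha
    have hsub : (polynomialFunctions (spectrum ℝ a) : Set C(spectrum ℝ a, ℝ)) ⊆
        (cfcHom ha (R := ℝ)) ⁻¹' {x | Commute b x} := by
      intro g hg
      rw [polynomialFunctions_coe] at hg
      obtain ⟨p, rfl⟩ := hg
      show Commute b (cfcHom ha (Polynomial.toContinuousMapOnAlgHom (spectrum ℝ a) p))
      have h2 : cfcHom ha (Polynomial.toContinuousMapOnAlgHom (spectrum ℝ a) p) =
          Polynomial.aeval a p := DFunLike.congr_fun hkey p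
      rw [h2]
      exact hpoly p
    have hdense := polynomialFunctions.topologicalClosure (spectrum ℝ a)
    have hg1 : g ∈ (polynomialFunctions (spectrum ℝ a)).topologicalClosure := by
      rw [hdense]; trivial
    have hg2 : g ∈ closure (polynomialFunctions (spectrum ℝ a) : Set C(spectrum ℝ a, ℝ)) := by
      rw [← Subalgebra.topologicalClosure_coe]; exact hg1
    exact closure_minimal hsub (hclosed.preimage (cfcHom_continuous ha)) hg2
  · rw [cfc_apply_of_not_continuousOn a hf]
    exact Commute.zero_right b
/-- Evaluation at a coordinate as a continuous linear map on `ℓ²(ℤ, H)`. -/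
noncomputable def evCLM (i : ℤ) : lp (fun _ : ℤ => H) 2 →L[ℂ] H :=
  LinearMap.mkContinuous
    { toFun := fun f => f i
      map_add' := fun f g => rfl
      map_smul' := fun c f => rfl }
    1 (fun f => by show ‖f i‖ ≤ 1 * ‖f‖; simpa using lp.norm_apply_le_norm (by norm_num) f i)

@[simp] lemma evCLM_apply (i : ℤ) (f : lp (fun _ : ℤ => H) 2) : evCLM i f = f i := rfl

/-- `lp.single` as a continuous linear map. -/
noncomputable def singleCLM (j : ℤ) : H →L[ℂ] lp (fun _ : ℤ => H) 2 :=
  LinearMap.mkContinuous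
    { toFun := fun x => lp.single 2 j x
      map_add' := fun x y => by
        refine lp.ext (funext fun m => ?_)
        by_cases h : m = j
        · subst h
          simp [lp.single_apply_self]
        · simp [lp.single_apply_ne _ _ _ h]
      map_smul' := fun c x => by simp }
    1 (fun x => by
      simpa using (lp.norm_single (p := 2) (by norm_num) (fun _ : ℤ => x) j).le)

@[simp] lemma singleCLM_apply (j : ℤ) (x : H) : singleCLM j x = lp.single 2 j x := rfl

end AuxiliaryLemmas

/-- If `S`, `T` are bilateral weighted shifts with (strictly) positive uniformly
bounded weights and `U` is a unitary with `US = TU`, then `U` is constant on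
diagonals: its matrix entries satisfy `U_{i+1,j+1} = U_{i,j}` for all `i, j`. -/
theorem unitary_intertwiner_constant_on_diagonals {H : Type*} [NormedAddCommGroup H]
    [InnerProductSpace ℂ H] [CompleteSpace H]
    (sw tw : ℤ → H →L[ℂ] H)
    (hsbdd : ∃ C : ℝ, ∀ i : ℤ, ‖sw i‖ ≤ C) (htbdd : ∃ C : ℝ, ∀ i : ℤ, ‖tw i‖ ≤ C)
    (hspos : ∀ (i : ℤ) (h : H), h ≠ 0 → 0 < ⟪sw i h, h⟫_ℂ)
    (htpos : ∀ (i : ℤ) (h : H), h ≠ 0 → 0 < ⟪tw i h, h⟫_ℂ)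
    (S T U : lp (fun _ : ℤ => H) 2 →L[ℂ] lp (fun _ : ℤ => H) 2)
    (hS : ∀ (x : lp (fun _ : ℤ => H) 2) (i : ℤ), S x i = sw i (x (i - 1)))
    (hT : ∀ (x : lp (fun _ : ℤ => H) 2) (i : ℤ), T x i = tw i (x (i - 1)))
    (hU : ContinuousLinearMap.adjoint U * U = 1 ∧ U * ContinuousLinearMap.adjoint U = 1)
    (hUS : U * S = T * U) :
    ∀ (i j : ℤ) (x : H),
      (U (lp.single 2 (j + 1) x)) (i + 1) = (U (lp.single 2 j x)) i := by
  classical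
  -- self-adjointness of the weights
  have selfadj : ∀ (w : ℤ → H →L[ℂ] H), (∀ (k : ℤ) (h : H), h ≠ 0 → 0 < ⟪w k h, h⟫_ℂ) →
      ∀ k : ℤ, IsSelfAdjoint (w k) := by
    intro w hw k
    rw [ContinuousLinearMap.isSelfAdjoint_iff_isSymmetric]
    rw [LinearMap.isSymmetric_iff_inner_map_self_real]
    intro v
    by_cases hv : v = 0
    · simp [hv]
    · have hz := hw k v hv
      rw [Complex.lt_def] at hz
      rw [Complex.conj_eq_iff_im]
      simpa using hz.2.symm
  have hsa := selfadj sw hspos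
  have hta := selfadj tw htpos
  have hssymm : ∀ (k : ℤ), (sw k : H →ₗ[ℂ] H).IsSymmetric := fun k =>
    ContinuousLinearMap.isSelfAdjoint_iff_isSymmetric.mp (hsa k)
  have htsymm : ∀ (k : ℤ), (tw k : H →ₗ[ℂ] H).IsSymmetric := fun k =>
    ContinuousLinearMap.isSelfAdjoint_iff_isSymmetric.mp (hta k)
  -- action of S, T on single vectors
  have hS1 : ∀ (k : ℤ) (v : H), S (lp.single 2 k v) = lp.single 2 (k + 1) (sw (k + 1) v) := by
    intro k v
    refine lp.ext (funext fun m => ?_)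
    rw [hS]
    by_cases h : m = k + 1
    · subst h
      have : k + 1 - 1 = k := by ring
      rw [this, lp.single_apply_self, lp.single_apply_self]
    · have h' : m - 1 ≠ k := fun hc => h (by omega)
      rw [lp.single_apply_ne _ _ _ h', lp.single_apply_ne _ _ _ h, map_zero]
  have hT1 : ∀ (k : ℤ) (v : H), T (lp.single 2 k v) = lp.single 2 (k + 1) (tw (k + 1) v) := by
    intro k v
    refine lp.ext (funext fun m => ?_)
    rw [hT]
    by_cases h : m = k + 1
    · subst h
      have : k + 1 - 1 = k := by ring
      rw [this, lp.single_apply_self, lp.single_apply_self]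
    · have h' : m - 1 ≠ k := fun hc => h (by omega)
      rw [lp.single_apply_ne _ _ _ h', lp.single_apply_ne _ _ _ h, map_zero]
  -- the intertwining relation for adjoints
  have hadj : U * ContinuousLinearMap.adjoint S = ContinuousLinearMap.adjoint T * U := by
    have h1 : S * ContinuousLinearMap.adjoint U = ContinuousLinearMap.adjoint U * T := by
      calc S * ContinuousLinearMap.adjoint U
          = (ContinuousLinearMap.adjoint U * U) * S * ContinuousLinearMap.adjoint U := by
            rw [hU.1, one_mul]
        _ = ContinuousLinearMap.adjoint U * (U * S) * ContinuousLinearMap.adjoint U := by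
            rw [mul_assoc (ContinuousLinearMap.adjoint U) U S]
        _ = ContinuousLinearMap.adjoint U * (T * U) * ContinuousLinearMap.adjoint U := by
            rw [hUS]
        _ = ContinuousLinearMap.adjoint U * T * (U * ContinuousLinearMap.adjoint U) := by
            rw [← mul_assoc (ContinuousLinearMap.adjoint U) T U, mul_assoc]
        _ = ContinuousLinearMap.adjoint U * T := by rw [hU.2, mul_one]
    have h2 := congrArg star h1
    simp only [star_mul, ContinuousLinearMap.star_eq_adjoint,
      ContinuousLinearMap.adjoint_adjoint] at h2
    exact h2
  -- adjoint of S on single vectors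
  have hSadj : ∀ (k : ℤ) (v : H),
      ContinuousLinearMap.adjoint S (lp.single 2 k v) = lp.single 2 (k - 1) (sw k v) := by
    intro k v
    refine ext_inner_right ℂ fun z => ?_
    rw [ContinuousLinearMap.adjoint_inner_left, lp.inner_single_left, lp.inner_single_left,
      hS]
    exact (hssymm k v (z (k - 1))).symm
  -- component formula for adjoint of T
  have hTadj : ∀ (y : lp (fun _ : ℤ => H) 2) (m : ℤ),
      (ContinuousLinearMap.adjoint T y) m = tw (m + 1) (y (m + 1)) := by
    intro y m
    refine ext_inner_left ℂ fun h => ?_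
    calc ⟪h, (ContinuousLinearMap.adjoint T y) m⟫_ℂ
        = ⟪lp.single 2 m h, ContinuousLinearMap.adjoint T y⟫_ℂ :=
          by rw [lp.inner_single_left]
      _ = ⟪T (lp.single 2 m h), y⟫_ℂ := ContinuousLinearMap.adjoint_inner_right T _ _
      _ = ⟪lp.single 2 (m + 1) (tw (m + 1) h), y⟫_ℂ := by rw [hT1]
      _ = ⟪tw (m + 1) h, y (m + 1)⟫_ℂ := lp.inner_single_left (m + 1) _ _
      _ = ⟪h, tw (m + 1) (y (m + 1))⟫_ℂ := htsymm (m + 1) h (y (m + 1))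
  intro i j x
  set sC : H →L[ℂ] H := sw (j + 1) with hsCdef
  set tC : H →L[ℂ] H := tw (i + 1) with htCdef
  set A : H →L[ℂ] H := (evCLM i).comp (U.comp (singleCLM j)) with hAdef
  set B : H →L[ℂ] H := (evCLM (i + 1)).comp (U.comp (singleCLM (j + 1))) with hBdef
  have hA_apply : ∀ v : H, A v = (U (lp.single 2 j v)) i := fun v => rfl
  have hB_apply : ∀ v : H, B v = (U (lp.single 2 (j + 1) v)) (i + 1) := fun v => rfl
  -- first relation : B ∘ s = t ∘ A
  have hBs : B * sC = tC * A := by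
    ext v
    rw [ContinuousLinearMap.mul_apply, ContinuousLinearMap.mul_apply, hB_apply, hA_apply]
    have hus : U (S (lp.single 2 j v)) = T (U (lp.single 2 j v)) :=
      congrArg (fun F : lp (fun _ : ℤ => H) 2 →L[ℂ] lp (fun _ : ℤ => H) 2 =>
        F (lp.single 2 j v)) hUS
    rw [hS1 j v] at hus
    have h' : (U (lp.single 2 (j + 1) (sC v))) (i + 1) =
        (T (U (lp.single 2 j v))) (i + 1) := by rw [hus]
    rw [hT, show i + 1 - 1 = i by ring] at h'
    exact h'
  -- second relation : A ∘ s = t ∘ B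
  have hAs : A * sC = tC * B := by
    ext v
    rw [ContinuousLinearMap.mul_apply, ContinuousLinearMap.mul_apply, hB_apply, hA_apply]
    have hus : U (ContinuousLinearMap.adjoint S (lp.single 2 (j + 1) v)) =
        ContinuousLinearMap.adjoint T (U (lp.single 2 (j + 1) v)) :=
      congrArg (fun F : lp (fun _ : ℤ => H) 2 →L[ℂ] lp (fun _ : ℤ => H) 2 =>
        F (lp.single 2 (j + 1) v)) hadj
    rw [hSadj (j + 1) v, show j + 1 - 1 = j by ring] at hus
    have h' : (U (lp.single 2 j (sC v))) i =
        (ContinuousLinearMap.adjoint T (U (lp.single 2 (j + 1) v))) i := by rw [hus]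
    rw [hTadj] at h'
    exact h'
  -- the difference and the anti-commutation relation
  set C : H →L[ℂ] H := A - B with hCdef
  have hCs : C * sC = -(tC * C) := by
    rw [hCdef, sub_mul, hAs, hBs, mul_sub, neg_sub]
  have htC : tC * C = -(C * sC) := by rw [hCs, neg_neg]
  -- the adjoint relation
  have hsS : ContinuousLinearMap.adjoint sC = sC := hsa (j + 1)
  have htS : ContinuousLinearMap.adjoint tC = tC := hta (i + 1)
  have hCadj : sC * ContinuousLinearMap.adjoint C = -(ContinuousLinearMap.adjoint C * tC) := by
    have h2 := congrArg star hCs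
    simp only [star_mul, star_neg, ContinuousLinearMap.star_eq_adjoint] at h2
    rwa [hsS, htS] at h2
  set D : H →L[ℂ] H := C * ContinuousLinearMap.adjoint C with hDdef
  have hDt : tC * D = D * tC := by
    calc tC * D = (tC * C) * ContinuousLinearMap.adjoint C := by rw [hDdef, mul_assoc]
      _ = -((C * sC) * ContinuousLinearMap.adjoint C) := by rw [htC, neg_mul]
      _ = -(C * (sC * ContinuousLinearMap.adjoint C)) := by rw [mul_assoc]
      _ = -(C * (-(ContinuousLinearMap.adjoint C * tC))) := by rw [hCadj]
      _ = C * (ContinuousLinearMap.adjoint C * tC) := by rw [mul_neg, neg_neg]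
      _ = D * tC := by rw [hDdef, mul_assoc]
  have hCsCadj : C * sC * ContinuousLinearMap.adjoint C = -(tC * D) := by
    rw [hCs, neg_mul, hDdef, mul_assoc]
  have ht0 : (0 : H →L[ℂ] H) ≤ tC := by
    rw [ContinuousLinearMap.nonneg_iff_isPositive, ContinuousLinearMap.isPositive_iff_complex]
    intro v
    by_cases hv : v = 0
    · simp [hv]
    · have hz := htpos (i + 1) v hv
      rw [Complex.lt_def] at hz
      constructor
      · apply Complex.ext
        · simp
        · simpa using hz.2
      · simpa using le_of_lt hz.1
  have tsa : IsSelfAdjoint tC := hta (i + 1)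
  set r := cfc Real.sqrt tC with hrdef
  have hrsa : IsSelfAdjoint r := cfc_predicate _ tC
  have hrr : r * r = tC := by
    rw [hrdef, ← cfc_mul Real.sqrt Real.sqrt tC Real.continuous_sqrt.continuousOn
      Real.continuous_sqrt.continuousOn]
    have hEq : (spectrum ℝ tC).EqOn (fun y => Real.sqrt y * Real.sqrt y) (fun y : ℝ => y) :=
      fun y hy => Real.mul_self_sqrt (spectrum_nonneg_of_nonneg ht0 hy)
    rw [cfc_congr hEq, cfc_id' ℝ tC]
  have hDtC : Commute D tC := hDt.symm
  have hDr : Commute D r := commute_cfc_aux tC D tsa hDtC Real.sqrt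
  have hrsymm : (r : H →ₗ[ℂ] H).IsSymmetric :=
    ContinuousLinearMap.isSelfAdjoint_iff_isSymmetric.mp hrsa
  have hpos1 : ∀ h : H, 0 ≤ ⟪(tC * D) h, h⟫_ℂ := by
    intro h
    have e0 : tC * D = r * (D * r) := by
      rw [← hrr, mul_assoc, hDr.eq]
    have e1 : (tC * D) h = r (D (r h)) := by rw [e0]; rfl
    rw [e1]
    have e2 : ⟪r (D (r h)), h⟫_ℂ = ⟪D (r h), r h⟫_ℂ := hrsymm (D (r h)) h
    rw [e2]
    have e3 : ⟪D (r h), r h⟫_ℂ =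
        ⟪ContinuousLinearMap.adjoint C (r h), ContinuousLinearMap.adjoint C (r h)⟫_ℂ := by
      have : D (r h) = C (ContinuousLinearMap.adjoint C (r h)) := rfl
      rw [this]
      exact (ContinuousLinearMap.adjoint_inner_right C _ _).symm
    rw [e3, Complex.le_def]
    constructor
    · simpa using inner_self_nonneg (𝕜 := ℂ) (x := ContinuousLinearMap.adjoint C (r h))
    · exact (inner_self_im (𝕜 := ℂ) (ContinuousLinearMap.adjoint C (r h))).symm
  have hCadj0 : ∀ h : H, ContinuousLinearMap.adjoint C h = 0 := by
    intro h
    by_contra hne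
    have hposI := hspos (j + 1) _ hne
    have e4 : ⟪(tC * D) h, h⟫_ℂ =
        -⟪sC (ContinuousLinearMap.adjoint C h), ContinuousLinearMap.adjoint C h⟫_ℂ := by
      have e5 : tC * D = -(C * sC * ContinuousLinearMap.adjoint C) := by rw [hCsCadj, neg_neg]
      rw [e5, ContinuousLinearMap.neg_apply, inner_neg_left]
      congr 1
      have : (C * sC * ContinuousLinearMap.adjoint C) h =
          C (sC (ContinuousLinearMap.adjoint C h)) := rfl
      rw [this]
      exact (ContinuousLinearMap.adjoint_inner_right C _ _).symm
    have h6 := hpos1 h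
    rw [e4] at h6
    exact absurd (lt_of_lt_of_le hposI (neg_nonneg.mp h6)) (lt_irrefl 0)
  have hC0 : C = 0 := by
    have hadj0 : ContinuousLinearMap.adjoint C = 0 := by
      ext h
      rw [ContinuousLinearMap.zero_apply]
      exact hCadj0 h
    calc C = star (star C) := (star_star C).symm
      _ = star (ContinuousLinearMap.adjoint C) := rfl
      _ = star (0 : H →L[ℂ] H) := by rw [hadj0]
      _ = 0 := star_zero _
  have hABeq : A = B := by rwa [hCdef, sub_eq_zero] at hC0
  have hfin : B x = A x := by rw [hABeq]
  exact hfin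
end

section
/- Let S, T be bilateral weighted shifts on ℓ²(ℤ, H) with quasi-invertible uniformly bounded weights. If there is a unitary U of diagonal form (i.e., for some p ∈ ℤ, the only nonzero matrix entries of U are U_{i+p,i}, i ∈ ℤ) with US = TU, then for every i ∈ ℤ the operators |S_i| and |T_{i+p}| are unitarily equivalent; in particular σ(|S_i|) = σ(|T_{i+p}|) for all i ∈ ℤ. -/
open scoped InnerProductSpace

/-- The modulus `|A| = (A*A)^{1/2}` of a bounded operator on a Hilbert space. -/
noncomputable def opAbs {E : Type*} [NormedAddCommGroup E] [InnerProductSpace ℂ E]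
    [CompleteSpace E] (A : E →L[ℂ] E) : E →L[ℂ] E :=
  CFC.sqrt (ContinuousLinearMap.adjoint A * A)

section Aux

variable {H : Type*} [NormedAddCommGroup H] [InnerProductSpace ℂ H]

omit [InnerProductSpace ℂ H] in
lemma lp_single_add (j : ℤ) (x y : H) :
    (lp.single 2 j (x + y) : lp (fun _ : ℤ => H) 2) = lp.single 2 j x + lp.single 2 j y := by
  apply lp.ext
  funext k
  rcases eq_or_ne k j with rfl | hk
  · simp [lp.single_apply_self]
  · simp [lp.single_apply_ne _ _ _ hk]

end Aux

set_option maxHeartbeats 2000000 in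
set_option synthInstance.maxHeartbeats 400000 in
/-- If two bilateral weighted shifts with quasi-invertible uniformly bounded
weights are intertwined by a unitary `U` of diagonal form (the only possibly
nonzero matrix entries of `U` are `U_{i+p,i}`), then `|S_i|` and `|T_{i+p}|` are
unitarily equivalent for all `i`; in particular their spectra coincide. -/
theorem diagonal_unitary_intertwiner_moduli_unitarily_equivalent {H : Type*}
    [NormedAddCommGroup H] [InnerProductSpace ℂ H] [CompleteSpace H]
    (sw tw : ℤ → H →L[ℂ] H)
    (hsbdd : ∃ C : ℝ, ∀ i : ℤ, ‖sw i‖ ≤ C) (htbdd : ∃ C : ℝ, ∀ i : ℤ, ‖tw i‖ ≤ C)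
    (hsqi : ∀ i : ℤ, LinearMap.ker (sw i : H →ₗ[ℂ] H) = ⊥ ∧
      LinearMap.ker (ContinuousLinearMap.adjoint (sw i) : H →ₗ[ℂ] H) = ⊥)
    (htqi : ∀ i : ℤ, LinearMap.ker (tw i : H →ₗ[ℂ] H) = ⊥ ∧
      LinearMap.ker (ContinuousLinearMap.adjoint (tw i) : H →ₗ[ℂ] H) = ⊥)
    (S T U : lp (fun _ : ℤ => H) 2 →L[ℂ] lp (fun _ : ℤ => H) 2)
    (hS : ∀ (x : lp (fun _ : ℤ => H) 2) (i : ℤ), S x i = sw i (x (i - 1)))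
    (hT : ∀ (x : lp (fun _ : ℤ => H) 2) (i : ℤ), T x i = tw i (x (i - 1)))
    (hU : ContinuousLinearMap.adjoint U * U = 1 ∧ U * ContinuousLinearMap.adjoint U = 1)
    (p : ℤ)
    (hdiag : ∀ (i j : ℤ), i ≠ j + p → ∀ x : H, (U (lp.single 2 j x)) i = 0)
    (hUS : U * S = T * U) :
    ∀ i : ℤ,
      (∃ W : H →L[ℂ] H,
        (ContinuousLinearMap.adjoint W * W = 1 ∧ W * ContinuousLinearMap.adjoint W = 1) ∧
          W * opAbs (sw i) = opAbs (tw (i + p)) * W) ∧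
      spectrum ℂ (opAbs (sw i)) = spectrum ℂ (opAbs (tw (i + p))) := by
  obtain ⟨hU1, hU2⟩ := hU
  -- the diagonal entries of U
  have hb : ∀ (j : ℤ) (x : H), ‖U (lp.single 2 j x) (j + p)‖ ≤ ‖U‖ * ‖x‖ := by
    intro j x
    have hs : ‖(lp.single 2 j x : lp (fun _ : ℤ => H) 2)‖ = ‖x‖ :=
      lp.norm_single (E := fun _ : ℤ => H) (p := 2) (by norm_num) j x
    calc ‖U (lp.single 2 j x) (j + p)‖ ≤ ‖U (lp.single 2 j x)‖ :=
          lp.norm_apply_le_norm (by norm_num) _ _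
      _ ≤ ‖U‖ * ‖(lp.single 2 j x : lp (fun _ : ℤ => H) 2)‖ := U.le_opNorm _
      _ = ‖U‖ * ‖x‖ := by rw [hs]
  let V : ℤ → H →L[ℂ] H := fun j =>
    LinearMap.mkContinuous
      { toFun := fun x => U (lp.single 2 j x) (j + p)
        map_add' := by
          intro x y
          show U (lp.single 2 j (x + y)) (j + p)
              = U (lp.single 2 j x) (j + p) + U (lp.single 2 j y) (j + p)
          rw [lp_single_add, map_add]
          simp
        map_smul' := by
          intro c x
          show U (lp.single 2 j (c • x)) (j + p) = c • U (lp.single 2 j x) (j + p)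
          rw [lp.single_smul, map_smul]
          simp }
      ‖U‖ (hb j)
  have hV : ∀ (j : ℤ) (x : H), V j x = U (lp.single 2 j x) (j + p) := fun _ _ => rfl
  have hUsingle : ∀ (j : ℤ) (x : H),
      U (lp.single 2 j x) = lp.single 2 (j + p) (V j x) := by
    intro j x
    apply lp.ext
    funext k
    rcases eq_or_ne k (j + p) with rfl | hk
    · rw [lp.single_apply_self]; rfl
    · rw [lp.single_apply_ne _ _ _ hk]; exact hdiag k j hk x
  -- V j preserves inner products
  have hVinner : ∀ (j : ℤ) (x y : H), ⟪V j x, V j y⟫_ℂ = ⟪x, y⟫_ℂ := by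
    intro j x y
    have h1 : ⟪U (lp.single 2 j x), U (lp.single 2 j y)⟫_ℂ = ⟪x, y⟫_ℂ := by
      calc ⟪U (lp.single 2 j x), U (lp.single 2 j y)⟫_ℂ
          = ⟪ContinuousLinearMap.adjoint U (U (lp.single 2 j x)), lp.single 2 j y⟫_ℂ :=
            (ContinuousLinearMap.adjoint_inner_left U _ _).symm
        _ = ⟪(lp.single 2 j x : lp (fun _ : ℤ => H) 2), lp.single 2 j y⟫_ℂ := by
            rw [← ContinuousLinearMap.mul_apply, hU1, ContinuousLinearMap.one_apply]
        _ = ⟪x, y⟫_ℂ := by rw [lp.inner_single_left, lp.single_apply_self]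
    calc ⟪V j x, V j y⟫_ℂ
        = ⟪U (lp.single 2 j x), U (lp.single 2 j y)⟫_ℂ := by
          rw [hUsingle j x, lp.inner_single_left, hV j y]
      _ = ⟪x, y⟫_ℂ := h1
  have hVadj : ∀ j : ℤ, ContinuousLinearMap.adjoint (V j) * V j = 1 := by
    intro j
    ext x
    rw [ContinuousLinearMap.mul_apply, ContinuousLinearMap.one_apply]
    refine ext_inner_right ℂ fun y => ?_
    rw [ContinuousLinearMap.adjoint_inner_left]
    exact hVinner j x y
  -- the adjoint of U is also diagonal
  have hUstar : ∀ (j : ℤ) (y : H),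
      (ContinuousLinearMap.adjoint U) (lp.single 2 (j + p) y)
        = lp.single 2 j ((ContinuousLinearMap.adjoint (V j)) y) := by
    intro j y
    apply lp.ext
    funext k
    refine ext_inner_right ℂ fun x => ?_
    have hcomp : ⟪(ContinuousLinearMap.adjoint U (lp.single 2 (j + p) y)) k, x⟫_ℂ
        = ⟪(lp.single 2 (j + p) y : lp (fun _ : ℤ => H) 2), U (lp.single 2 k x)⟫_ℂ := by
      rw [← ContinuousLinearMap.adjoint_inner_left U]
      exact (lp.inner_single_right (G := fun _ : ℤ => H) k x _).symm
    rw [hcomp, hUsingle k x, lp.inner_single_left]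
    rcases eq_or_ne k j with rfl | hk
    · rw [lp.single_apply_self, lp.single_apply_self,
        ContinuousLinearMap.adjoint_inner_left]
    · have h1 : j + p ≠ k + p := by omega
      rw [lp.single_apply_ne _ _ _ h1, lp.single_apply_ne _ _ _ hk]
      simp
  have hVsur : ∀ j : ℤ, V j * ContinuousLinearMap.adjoint (V j) = 1 := by
    intro j
    ext y
    rw [ContinuousLinearMap.mul_apply, ContinuousLinearMap.one_apply]
    have h2 : (U * ContinuousLinearMap.adjoint U) (lp.single 2 (j + p) y)
        = lp.single 2 (j + p) (V j (ContinuousLinearMap.adjoint (V j) y)) := by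
      rw [ContinuousLinearMap.mul_apply, hUstar j y, hUsingle]
    rw [hU2, ContinuousLinearMap.one_apply] at h2
    have h3 := congrArg (fun f : lp (fun _ : ℤ => H) 2 => (f : ∀ _ : ℤ, H) (j + p)) h2
    simpa [lp.single_apply_self] using h3.symm
  -- the intertwining relation on the weights
  have hint : ∀ (i : ℤ) (x : H), V i (sw i x) = tw (i + p) (V (i - 1) x) := by
    intro i x
    have hSsingle : S (lp.single 2 (i - 1) x) = lp.single 2 i (sw i x) := by
      apply lp.ext
      funext k
      rw [hS]
      rcases eq_or_ne k i with rfl | hk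
      · simp [lp.single_apply_self]
      · rw [lp.single_apply_ne (E := fun _ : ℤ => H) 2 (i - 1) x (show k - 1 ≠ i - 1 by omega),
          map_zero, lp.single_apply_ne (E := fun _ : ℤ => H) 2 i _ hk]
    have h : (U * S) (lp.single 2 (i - 1) x) = (T * U) (lp.single 2 (i - 1) x) := by
      rw [hUS]
    rw [ContinuousLinearMap.mul_apply, hSsingle, hUsingle, ContinuousLinearMap.mul_apply,
      hUsingle] at h
    have h2 := congrArg (fun f : lp (fun _ : ℤ => H) 2 => (f : ∀ _ : ℤ, H) (i + p)) h
    simp only at h2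
    rw [lp.single_apply_self, hT, show i + p - 1 = i - 1 + p by omega,
      lp.single_apply_self] at h2
    exact h2
  intro i
  set A := sw i with hA
  set B := tw (i + p) with hB
  set W := V (i - 1) with hWdef
  -- unitarity facts in `star` form
  have hW1 : star W * W = 1 := by
    rw [ContinuousLinearMap.star_eq_adjoint]; exact hVadj (i - 1)
  have hW2 : W * star W = 1 := by
    rw [ContinuousLinearMap.star_eq_adjoint]; exact hVsur (i - 1)
  have hVi1 : star (V i) * V i = 1 := by
    rw [ContinuousLinearMap.star_eq_adjoint]; exact hVadj i
  have hWmul : V i * A = B * W := by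
    ext x
    simpa [ContinuousLinearMap.mul_apply] using hint i x
  -- star A * A is the conjugate of star B * B by W
  have key : star A * A = star W * (star B * B) * W := by
    calc star A * A = star A * (star (V i) * V i) * A := by rw [hVi1, mul_one]
      _ = star (V i * A) * (V i * A) := by simp [star_mul, mul_assoc]
      _ = star (B * W) * (B * W) := by rw [hWmul]
      _ = star W * (star B * B) * W := by simp [star_mul, mul_assoc]
  have hBnn : (0 : H →L[ℂ] H) ≤ star B * B := star_mul_self_nonneg B
  have hQnn : (0 : H →L[ℂ] H) ≤ CFC.sqrt (star B * B) := CFC.sqrt_nonneg (a := star B * B)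
  have hconj_nn : (0 : H →L[ℂ] H) ≤ star W * CFC.sqrt (star B * B) * W :=
    star_left_conjugate_nonneg hQnn W
  have hsq : (star W * CFC.sqrt (star B * B) * W) * (star W * CFC.sqrt (star B * B) * W)
      = star W * (star B * B) * W := by
    have h1 : CFC.sqrt (star B * B) * CFC.sqrt (star B * B) = star B * B :=
      CFC.sqrt_mul_sqrt_self _ hBnn
    calc (star W * CFC.sqrt (star B * B) * W) * (star W * CFC.sqrt (star B * B) * W)
        = star W * (CFC.sqrt (star B * B) * ((W * star W) * CFC.sqrt (star B * B))) * W := by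
          simp [mul_assoc]
      _ = star W * (star B * B) * W := by rw [hW2, one_mul, h1]
  have habs : opAbs A = star W * opAbs B * W := by
    rw [opAbs, opAbs, ← ContinuousLinearMap.star_eq_adjoint,
      ← ContinuousLinearMap.star_eq_adjoint, key]
    exact (CFC.sqrt_unique hsq hconj_nn)
  have hcomm : W * opAbs A = opAbs B * W := by
    rw [habs, ← mul_assoc, ← mul_assoc, hW2, one_mul]
  refine ⟨⟨W, ⟨?_, ?_⟩, hcomm⟩, ?_⟩
  · rw [← ContinuousLinearMap.star_eq_adjoint]; exact hW1
  · rw [← ContinuousLinearMap.star_eq_adjoint]; exact hW2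
  · let u : (H →L[ℂ] H)ˣ := ⟨W, star W, hW2, hW1⟩
    rw [habs]
    exact spectrum.units_conjugate' (u := u)
end

section
/- Let H = ℂᵏ with k ≥ 2 and for each n ∈ ℤ let (x_{n,i})_{i=1}^k be positive reals, pairwise distinct across all pairs (n,i), with sup_{n,i} x_{n,i} < ∞. Let S_n = diag(x_{n,1},…,x_{n,k}) and T_n = diag(x_{n-1,1}, x_{n-2,2},…, x_{n-k,k}). Then the bilateral weighted shifts S, T with weights (S_n), (T_n) are unitarily equivalent, but every unitary U ∈ B(ℓ²(ℤ, ℂᵏ)) with US = TU has at least k non-zero diagonals (i.e., there exist at least k distinct values d ∈ ℤ for which some matrix entry U_{i+d,i} is non-zero). -/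
open scoped ENNReal

noncomputable section

namespace BilShiftAux

variable {k : ℕ}

local notation "⟪" x ", " y "⟫" => @inner ℂ _ _ x y

def toE (v : Fin k → ℂ) : EuclideanSpace ℂ (Fin k) := WithLp.toLp 2 v

@[simp] lemma toE_apply (v : Fin k → ℂ) (i : Fin k) : toE v i = v i := rfl

lemma toReal_two : ((2:ℝ≥0∞)).toReal = 2 := by norm_num

lemma norm_sq_eq (v : EuclideanSpace ℂ (Fin k)) : ‖v‖ ^ (2:ℝ) = ∑ i, ‖v i‖ ^ (2:ℝ) := by
  have h : (2:ℝ) = ((2:ℕ):ℝ) := by norm_num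
  simp only [h, Real.rpow_natCast]
  rw [EuclideanSpace.norm_eq v, Real.sq_sqrt
    (Finset.sum_nonneg fun i _ => sq_nonneg _)]

lemma summable_coord {y : ∀ _ : ℤ, EuclideanSpace ℂ (Fin k)} (hy : Memℓp y 2) (i : Fin k) :
    Summable fun n => ‖y n i‖ ^ (2:ℝ) := by
  have hs : Summable fun n => ‖y n‖ ^ ((2:ℝ≥0∞)).toReal :=
    (memℓp_gen_iff (by rw [toReal_two]; norm_num)).1 hy
  simp only [toReal_two, norm_sq_eq] at hs
  refine hs.of_nonneg_of_le (fun n => by positivity) fun n => ?_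
  exact Finset.single_le_sum (f := fun j => ‖y n j‖ ^ (2:ℝ))
    (fun j _ => by positivity) (Finset.mem_univ i)

lemma summable_coord_comp {y : ∀ _ : ℤ, EuclideanSpace ℂ (Fin k)} (hy : Memℓp y 2)
    (i : Fin k) (e : ℤ ≃ ℤ) : Summable fun n => ‖y (e n) i‖ ^ (2:ℝ) :=
  (summable_coord hy i).comp_injective e.injective

lemma shift_memℓp (e : Fin k → ℤ ≃ ℤ) {y : ∀ _ : ℤ, EuclideanSpace ℂ (Fin k)}
    (hy : Memℓp y 2) :
    Memℓp (fun n => toE fun i => y (e i n) i) 2 := by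
  apply memℓp_gen
  have : (fun n => ‖toE fun i => y (e i n) i‖ ^ ((2:ℝ≥0∞)).toReal)
      = fun n => ∑ i, ‖y (e i n) i‖ ^ (2:ℝ) := by
    funext n; rw [toReal_two, norm_sq_eq]; rfl
  rw [this]
  exact summable_sum fun i _ => summable_coord_comp hy i (e i)

lemma shift_tsum_eq (e : Fin k → ℤ ≃ ℤ) {y : ∀ _ : ℤ, EuclideanSpace ℂ (Fin k)}
    (hy : Memℓp y 2) :
    (∑' n, ‖toE fun i => y (e i n) i‖ ^ (2:ℝ)) = ∑' n, ‖y n‖ ^ (2:ℝ) :=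
  calc (∑' n, ‖toE fun i => y (e i n) i‖ ^ (2:ℝ))
      = ∑' n, ∑ i, ‖y (e i n) i‖ ^ (2:ℝ) := tsum_congr fun n => norm_sq_eq _
    _ = ∑ i, ∑' n, ‖y (e i n) i‖ ^ (2:ℝ) := Summable.tsum_finsetSum fun i _ => summable_coord_comp hy i (e i)
    _ = ∑ i, ∑' n, ‖y n i‖ ^ (2:ℝ) := Finset.sum_congr rfl fun i _ =>
          (e i).tsum_eq (f := fun n => ‖y n i‖ ^ (2:ℝ))
    _ = ∑' n, ∑ i, ‖y n i‖ ^ (2:ℝ) :=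
          (Summable.tsum_finsetSum fun i _ => summable_coord hy i).symm
    _ = ∑' n, ‖y n‖ ^ (2:ℝ) := tsum_congr fun n => (norm_sq_eq _).symm

local notation "H" => lp (fun _ : ℤ => EuclideanSpace ℂ (Fin k)) 2

noncomputable def shiftL (e : Fin k → ℤ ≃ ℤ) : H →ₗ[ℂ] H where
  toFun y := ⟨fun n => toE fun i => y (e i n) i, shift_memℓp e (lp.memℓp y)⟩
  map_add' _ _ := rfl
  map_smul' _ _ := rfl

@[simp] lemma shiftL_apply (e : Fin k → ℤ ≃ ℤ) (y : H) (n : ℤ) (i : Fin k) :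
    (shiftL e y : ∀ _ : ℤ, EuclideanSpace ℂ (Fin k)) n i = y (e i n) i := rfl

lemma shiftL_norm (e : Fin k → ℤ ≃ ℤ) (y : H) : ‖shiftL e y‖ = ‖y‖ := by
  have h0 : 0 < ((2:ℝ≥0∞)).toReal := by norm_num
  have h3 : ‖shiftL e y‖ ^ ((2:ℝ≥0∞)).toReal = ‖y‖ ^ ((2:ℝ≥0∞)).toReal := by
    rw [lp.norm_rpow_eq_tsum h0 (shiftL e y), lp.norm_rpow_eq_tsum h0 y]
    have ht : ((2:ℝ≥0∞)).toReal = (2:ℝ) := by norm_num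
    rw [ht]
    exact shift_tsum_eq e (lp.memℓp y)
  have ht : ((2:ℝ≥0∞)).toReal = (2:ℝ) := by norm_num
  rw [ht] at h3
  have h4 : (2:ℝ) = ((2:ℕ):ℝ) := by norm_num
  rw [h4, Real.rpow_natCast, Real.rpow_natCast] at h3
  calc ‖shiftL e y‖ = Real.sqrt (‖shiftL e y‖ ^ 2) := (Real.sqrt_sq (norm_nonneg _)).symm
    _ = Real.sqrt (‖y‖ ^ 2) := by rw [h3]
    _ = ‖y‖ := Real.sqrt_sq (norm_nonneg _)

noncomputable def shiftIso (e : Fin k → ℤ ≃ ℤ) : H ≃ₗᵢ[ℂ] H where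
  toLinearEquiv := LinearEquiv.ofLinear (shiftL e) (shiftL fun i => (e i).symm)
    (LinearMap.ext fun y => Subtype.ext (funext fun n => PiLp.ext fun i =>
        congrArg (fun m => (y : ∀ _ : ℤ, EuclideanSpace ℂ (Fin k)) m i)
          ((e i).symm_apply_apply n)))
    (LinearMap.ext fun y => Subtype.ext (funext fun n => PiLp.ext fun i =>
        congrArg (fun m => (y : ∀ _ : ℤ, EuclideanSpace ℂ (Fin k)) m i)
          ((e i).apply_symm_apply n)))
  norm_map' := shiftL_norm e

lemma unitary_of_isometryEquiv {E : Type*} [NormedAddCommGroup E] [InnerProductSpace ℂ E]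
    [CompleteSpace E] (A : E ≃ₗᵢ[ℂ] E) :
    ContinuousLinearMap.adjoint A.toLinearIsometry.toContinuousLinearMap *
        A.toLinearIsometry.toContinuousLinearMap = 1 ∧
      A.toLinearIsometry.toContinuousLinearMap *
        ContinuousLinearMap.adjoint A.toLinearIsometry.toContinuousLinearMap = 1 := by
  set A' := A.toLinearIsometry.toContinuousLinearMap with hA'
  have happ : ∀ z, A' z = A z := fun z => rfl
  have h1 : ContinuousLinearMap.adjoint A' * A' = 1 := by
    ext z
    refine ext_inner_right ℂ fun w => ?_
    rw [ContinuousLinearMap.mul_apply, ContinuousLinearMap.adjoint_inner_left]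
    rw [happ, happ]
    rw [A.inner_map_map]
    rfl
  refine ⟨h1, ?_⟩
  ext z
  have hz : z = A' (A.symm z) := (A.apply_symm_apply z).symm
  rw [ContinuousLinearMap.one_apply]
  conv_lhs => rw [hz]
  rw [ContinuousLinearMap.mul_apply]
  have h2 : ContinuousLinearMap.adjoint A' (A' (A.symm z)) = A.symm z := by
    rw [← ContinuousLinearMap.mul_apply, h1, ContinuousLinearMap.one_apply]
  rw [h2, happ, A.apply_symm_apply]

lemma lp_single_apply' (m n : ℤ) (v : EuclideanSpace ℂ (Fin k)) :
    (lp.single (E := fun _ : ℤ => EuclideanSpace ℂ (Fin k)) 2 m v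
      : ∀ _ : ℤ, EuclideanSpace ℂ (Fin k)) n = if n = m then v else 0 := by
  rw [lp.single_apply]
  split_ifs with h
  · subst h; simp
  · simp [Pi.single_apply, h]

end BilShiftAux

end

set_option maxHeartbeats 1000000 in
/-- For `k ≥ 2`, take positive reals `x n i` (`n ∈ ℤ`, `i ∈ Fin k`), pairwise
distinct and uniformly bounded. Let `S_n = diag (x n 0, …, x n (k-1))` and
`T_n = diag (x (n-1) 0, x (n-2) 1, …, x (n-k) (k-1))`. Then the bilateral
weighted shifts `S`, `T` with these weights are unitarily equivalent, but every
unitary `U` with `US = TU` has at least `k` non-zero diagonals: there are at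
least `k` distinct `d ∈ ℤ` such that some matrix entry `U_{i+d,i}` is nonzero. -/
theorem bilateral_shift_example_k_nonzero_diagonals (k : ℕ) (hk : 2 ≤ k)
    (x : ℤ → Fin k → ℝ)
    (hxpos : ∀ n i, 0 < x n i)
    (hxinj : ∀ n i m j, x n i = x m j → n = m ∧ i = j)
    (hxbdd : ∃ C : ℝ, ∀ n i, x n i ≤ C)
    (sw tw : ℤ → EuclideanSpace ℂ (Fin k) →L[ℂ] EuclideanSpace ℂ (Fin k))
    (hsw : ∀ (n : ℤ) (v : EuclideanSpace ℂ (Fin k)) (i : Fin k),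
      sw n v i = (x n i : ℂ) * v i)
    (htw : ∀ (n : ℤ) (v : EuclideanSpace ℂ (Fin k)) (i : Fin k),
      tw n v i = (x (n - (i + 1 : ℕ)) i : ℂ) * v i)
    (S T : lp (fun _ : ℤ => EuclideanSpace ℂ (Fin k)) 2 →L[ℂ]
      lp (fun _ : ℤ => EuclideanSpace ℂ (Fin k)) 2)
    (hS : ∀ (y : lp (fun _ : ℤ => EuclideanSpace ℂ (Fin k)) 2) (i : ℤ),
      S y i = sw i (y (i - 1)))
    (hT : ∀ (y : lp (fun _ : ℤ => EuclideanSpace ℂ (Fin k)) 2) (i : ℤ),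
      T y i = tw i (y (i - 1))) :
    (∃ U : lp (fun _ : ℤ => EuclideanSpace ℂ (Fin k)) 2 →L[ℂ]
        lp (fun _ : ℤ => EuclideanSpace ℂ (Fin k)) 2,
      (ContinuousLinearMap.adjoint U * U = 1 ∧ U * ContinuousLinearMap.adjoint U = 1) ∧
        U * S = T * U) ∧
    ∀ U : lp (fun _ : ℤ => EuclideanSpace ℂ (Fin k)) 2 →L[ℂ]
        lp (fun _ : ℤ => EuclideanSpace ℂ (Fin k)) 2,
      (ContinuousLinearMap.adjoint U * U = 1 ∧ U * ContinuousLinearMap.adjoint U = 1) →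
      U * S = T * U →
      ∃ ds : Finset ℤ, k ≤ ds.card ∧
        ∀ d ∈ ds, ∃ (i : ℤ) (v : EuclideanSpace ℂ (Fin k)),
          (U (lp.single 2 i v)) (i + d) ≠ 0 := by
  classical
  constructor
  · -- existence of the canonical intertwining unitary
    set e : Fin k → ℤ ≃ ℤ := fun i => Equiv.subRight ((i : ℤ) + 1) with he
    refine ⟨(BilShiftAux.shiftIso e).toLinearIsometry.toContinuousLinearMap,
      BilShiftAux.unitary_of_isometryEquiv _, ?_⟩
    have hU₀ : ∀ (z : lp (fun _ : ℤ => EuclideanSpace ℂ (Fin k)) 2) (n : ℤ) (i : Fin k),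
        ((BilShiftAux.shiftIso e).toLinearIsometry.toContinuousLinearMap z) n i
          = z (n - ((i : ℤ) + 1)) i := fun z n i => rfl
    refine ContinuousLinearMap.ext fun y => ?_
    refine Subtype.ext (funext fun n => PiLp.ext fun i => ?_)
    have lhs : ((BilShiftAux.shiftIso e).toLinearIsometry.toContinuousLinearMap * S) y n i
        = (x (n - ((i : ℤ) + 1)) i : ℂ) * y (n - ((i : ℤ) + 1) - 1) i := by
      rw [ContinuousLinearMap.mul_apply, hU₀, hS, hsw]
    have rhs : (T * (BilShiftAux.shiftIso e).toLinearIsometry.toContinuousLinearMap) y n i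
        = (x (n - ((i : ℤ) + 1)) i : ℂ) * y (n - 1 - ((i : ℤ) + 1)) i := by
      rw [ContinuousLinearMap.mul_apply, hT, htw, hU₀]
      push_cast
      ring_nf
    have harith : n - ((i : ℤ) + 1) - 1 = n - 1 - ((i : ℤ) + 1) := by ring
    show ((BilShiftAux.shiftIso e).toLinearIsometry.toContinuousLinearMap * S) y n i
      = (T * (BilShiftAux.shiftIso e).toLinearIsometry.toContinuousLinearMap) y n i
    rw [lhs, rhs, harith]
  · intro U hU hUS
    obtain ⟨hU1, hU2⟩ := hU
    set ee : ℤ → Fin k → lp (fun _ : ℤ => EuclideanSpace ℂ (Fin k)) 2 :=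
      fun n i => lp.single 2 n (EuclideanSpace.single i (1:ℂ)) with hee
    have hsw1 : ∀ (n : ℤ) (i : Fin k),
        sw n (EuclideanSpace.single i (1:ℂ))
          = (x n i : ℂ) • EuclideanSpace.single i (1:ℂ) := by
      intro n i
      ext j
      rw [hsw]
      by_cases h : j = i
      · subst h; simp [EuclideanSpace.single_apply, PiLp.smul_apply]
      · simp [EuclideanSpace.single_apply, h, PiLp.smul_apply]
    have htw1 : ∀ (n : ℤ) (j : Fin k),
        tw n (EuclideanSpace.single j (1:ℂ))
          = (x (n - ((j : ℕ) + 1 : ℕ)) j : ℂ) • EuclideanSpace.single j (1:ℂ) := by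
      intro n j
      ext j'
      rw [htw]
      by_cases h : j' = j
      · subst h; simp [EuclideanSpace.single_apply, PiLp.smul_apply]
      · simp [EuclideanSpace.single_apply, h, PiLp.smul_apply]
    have hSe : ∀ (n : ℤ) (i : Fin k),
        S (ee n i) = (x (n+1) i : ℂ) • ee (n+1) i := by
      intro n i
      refine Subtype.ext (funext fun m => ?_)
      have hc : (((x (n+1) i : ℂ) • ee (n+1) i :
          lp (fun _ : ℤ => EuclideanSpace ℂ (Fin k)) 2)
            : ∀ _ : ℤ, EuclideanSpace ℂ (Fin k)) m
          = (x (n+1) i : ℂ) • ((ee (n+1) i :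
          lp (fun _ : ℤ => EuclideanSpace ℂ (Fin k)) 2)
            : ∀ _ : ℤ, EuclideanSpace ℂ (Fin k)) m := rfl
      rw [hc]
      rw [hS]
      show sw m ((ee n i) (m - 1)) = _
      rw [hee]
      by_cases h : m = n + 1
      · subst h
        rw [BilShiftAux.lp_single_apply', if_pos (by ring : n + 1 - 1 = n),
          BilShiftAux.lp_single_apply', if_pos rfl, hsw1]
      · rw [BilShiftAux.lp_single_apply', if_neg (by omega),
          BilShiftAux.lp_single_apply', if_neg h, map_zero, smul_zero]
    have hTe : ∀ (n : ℤ) (i : Fin k),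
        T (ee n i) = (x (n + 1 - ((i : ℕ) + 1 : ℕ)) i : ℂ) • ee (n+1) i := by
      intro n i
      refine Subtype.ext (funext fun m => ?_)
      have hc : (((x (n + 1 - ((i : ℕ) + 1 : ℕ)) i : ℂ) • ee (n+1) i :
          lp (fun _ : ℤ => EuclideanSpace ℂ (Fin k)) 2)
            : ∀ _ : ℤ, EuclideanSpace ℂ (Fin k)) m
          = (x (n + 1 - ((i : ℕ) + 1 : ℕ)) i : ℂ) • ((ee (n+1) i :
          lp (fun _ : ℤ => EuclideanSpace ℂ (Fin k)) 2)
            : ∀ _ : ℤ, EuclideanSpace ℂ (Fin k)) m := rfl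
      rw [hc, hT]
      show tw m ((ee n i) (m - 1)) = _
      rw [hee]
      by_cases h : m = n + 1
      · subst h
        rw [BilShiftAux.lp_single_apply', if_pos (by ring : n + 1 - 1 = n),
          BilShiftAux.lp_single_apply', if_pos rfl, htw1]
      · rw [BilShiftAux.lp_single_apply', if_neg (by omega),
          BilShiftAux.lp_single_apply', if_neg h, map_zero, smul_zero]
    have hinnerS : ∀ (z : lp (fun _ : ℤ => EuclideanSpace ℂ (Fin k)) 2) (n : ℤ) (i : Fin k),
        (inner ℂ (ee n i) (S z) : ℂ) = (x n i : ℂ) * z (n-1) i := by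
      intro z n i
      rw [hee]
      rw [lp.inner_single_left, EuclideanSpace.inner_single_left, hS, hsw]
      simp
    have hinnerT : ∀ (z : lp (fun _ : ℤ => EuclideanSpace ℂ (Fin k)) 2) (n : ℤ) (i : Fin k),
        (inner ℂ (ee n i) (T z) : ℂ) = (x (n - ((i : ℕ) + 1 : ℕ)) i : ℂ) * z (n-1) i := by
      intro z n i
      rw [hee]
      rw [lp.inner_single_left, EuclideanSpace.inner_single_left, hT, htw]
      simp
    have hinner_e : ∀ (z : lp (fun _ : ℤ => EuclideanSpace ℂ (Fin k)) 2) (n : ℤ) (i : Fin k),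
        (inner ℂ (ee n i) z : ℂ) = z n i := by
      intro z n i
      rw [hee, lp.inner_single_left, EuclideanSpace.inner_single_left]
      simp
    have haS : ∀ (n : ℤ) (i : Fin k),
        ContinuousLinearMap.adjoint S (ee n i) = (x n i : ℂ) • ee (n-1) i := by
      intro n i
      refine ext_inner_right ℂ fun z => ?_
      rw [ContinuousLinearMap.adjoint_inner_left, hinnerS, inner_smul_left, hinner_e]
      rw [Complex.conj_ofReal]
    have haT : ∀ (n : ℤ) (i : Fin k),
        ContinuousLinearMap.adjoint T (ee n i)
          = (x (n - ((i : ℕ) + 1 : ℕ)) i : ℂ) • ee (n-1) i := by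
      intro n i
      refine ext_inner_right ℂ fun z => ?_
      rw [ContinuousLinearMap.adjoint_inner_left, hinnerT, inner_smul_left, hinner_e]
      rw [Complex.conj_ofReal]
    have hAe : ∀ (n : ℤ) (i : Fin k),
        (S * ContinuousLinearMap.adjoint S) (ee n i) = ((x n i : ℂ)^2) • ee n i := by
      intro n i
      rw [ContinuousLinearMap.mul_apply, haS, map_smul, hSe, smul_smul]
      rw [sub_add_cancel, sq]
    have hBe : ∀ (n : ℤ) (i : Fin k),
        (T * ContinuousLinearMap.adjoint T) (ee n i)
          = ((x (n - ((i : ℕ) + 1 : ℕ)) i : ℂ)^2) • ee n i := by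
      intro n i
      rw [ContinuousLinearMap.mul_apply, haT, map_smul, hTe, smul_smul]
      rw [sub_add_cancel, sq]
    have hadjB : ContinuousLinearMap.adjoint (T * ContinuousLinearMap.adjoint T)
        = T * ContinuousLinearMap.adjoint T := by
      rw [ContinuousLinearMap.mul_def, ContinuousLinearMap.adjoint_comp,
        ContinuousLinearMap.adjoint_adjoint]
    have hadjUS : ContinuousLinearMap.adjoint S * ContinuousLinearMap.adjoint U
        = ContinuousLinearMap.adjoint U * ContinuousLinearMap.adjoint T := by
      have h := congrArg ContinuousLinearMap.adjoint hUS
      rw [ContinuousLinearMap.mul_def, ContinuousLinearMap.mul_def,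
        ContinuousLinearMap.adjoint_comp, ContinuousLinearMap.adjoint_comp] at h
      rw [ContinuousLinearMap.mul_def, ContinuousLinearMap.mul_def]
      exact h
    have hUTS : U * ContinuousLinearMap.adjoint S = ContinuousLinearMap.adjoint T * U := by
      calc U * ContinuousLinearMap.adjoint S
          = (U * ContinuousLinearMap.adjoint S) * 1 := (mul_one _).symm
        _ = (U * ContinuousLinearMap.adjoint S) * (ContinuousLinearMap.adjoint U * U) := by
            rw [hU1]
        _ = (U * (ContinuousLinearMap.adjoint S * ContinuousLinearMap.adjoint U)) * U := by
            simp only [mul_assoc]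
        _ = (U * (ContinuousLinearMap.adjoint U * ContinuousLinearMap.adjoint T)) * U := by
            rw [hadjUS]
        _ = ((U * ContinuousLinearMap.adjoint U) * ContinuousLinearMap.adjoint T) * U := by
            simp only [mul_assoc]
        _ = ContinuousLinearMap.adjoint T * U := by rw [hU2, one_mul]
    have hUA : U * (S * ContinuousLinearMap.adjoint S)
        = (T * ContinuousLinearMap.adjoint T) * U := by
      calc U * (S * ContinuousLinearMap.adjoint S)
          = (U * S) * ContinuousLinearMap.adjoint S := (mul_assoc _ _ _).symm
        _ = (T * U) * ContinuousLinearMap.adjoint S := by rw [hUS]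
        _ = T * (U * ContinuousLinearMap.adjoint S) := mul_assoc _ _ _
        _ = T * (ContinuousLinearMap.adjoint T * U) := by rw [hUTS]
        _ = (T * ContinuousLinearMap.adjoint T) * U := (mul_assoc _ _ _).symm
    refine ⟨Finset.image (fun i : Fin k => (i : ℤ) + 1) Finset.univ, ?_, ?_⟩
    · have hinj : Function.Injective fun i : Fin k => (i : ℤ) + 1 := by
        intro a b h
        simp only [add_left_inj, Int.natCast_inj] at h
        exact Fin.ext (by exact_mod_cast h)
      rw [Finset.card_image_of_injective _ hinj, Finset.card_univ, Fintype.card_fin]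
    · intro d hd
      obtain ⟨i, -, rfl⟩ := Finset.mem_image.1 hd
      refine ⟨0, EuclideanSpace.single i (1:ℂ), ?_⟩
      rw [zero_add]
      have hfB : (T * ContinuousLinearMap.adjoint T) (U (ee 0 i))
          = ((x 0 i : ℂ)^2) • U (ee 0 i) := by
        calc (T * ContinuousLinearMap.adjoint T) (U (ee 0 i))
            = ((T * ContinuousLinearMap.adjoint T) * U) (ee 0 i) := rfl
          _ = (U * (S * ContinuousLinearMap.adjoint S)) (ee 0 i) := by rw [hUA]
          _ = U ((S * ContinuousLinearMap.adjoint S) (ee 0 i)) := rfl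
          _ = U (((x 0 i : ℂ)^2) • ee 0 i) := by rw [hAe]
          _ = ((x 0 i : ℂ)^2) • U (ee 0 i) := map_smul _ _ _
      have hcoord : ∀ (m : ℤ) (j : Fin k),
          U (ee 0 i) m j ≠ 0 → j = i ∧ m = (i : ℤ) + 1 := by
        intro m j hne
        have h1 : (inner ℂ (ee m j) ((T * ContinuousLinearMap.adjoint T) (U (ee 0 i))) : ℂ)
            = ((x 0 i : ℂ)^2) * inner ℂ (ee m j) (U (ee 0 i)) := by
          rw [hfB, inner_smul_right]
        have h2 : (inner ℂ (ee m j) ((T * ContinuousLinearMap.adjoint T) (U (ee 0 i))) : ℂ)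
            = ((x (m - ((j : ℕ) + 1 : ℕ)) j : ℂ)^2) * inner ℂ (ee m j) (U (ee 0 i)) := by
          rw [← ContinuousLinearMap.adjoint_inner_left
            (T * ContinuousLinearMap.adjoint T) (U (ee 0 i)) (ee m j)]
          rw [hadjB, hBe, inner_smul_left]
          congr 1
          rw [map_pow, Complex.conj_ofReal]
        have heqx : x (m - ((j : ℕ) + 1 : ℕ)) j = x 0 i := by
          by_contra hne2
          have h3 : (((x (m - ((j : ℕ) + 1 : ℕ)) j : ℂ)^2 - ((x 0 i : ℂ))^2)
              * inner ℂ (ee m j) (U (ee 0 i)) : ℂ) = 0 := by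
            rw [sub_mul, h2.symm.trans h1, sub_self]
          rcases mul_eq_zero.1 h3 with h4 | h4
          · apply hne2
            have h5 : ((x (m - ((j : ℕ) + 1 : ℕ)) j : ℂ))^2 = ((x 0 i : ℂ))^2 := by
              linear_combination h4
            have h6 : (x (m - ((j : ℕ) + 1 : ℕ)) j)^2 = (x 0 i)^2 := by exact_mod_cast h5
            calc x (m - ((j : ℕ) + 1 : ℕ)) j
                = Real.sqrt ((x (m - ((j : ℕ) + 1 : ℕ)) j)^2) :=
                  (Real.sqrt_sq (hxpos _ _).le).symm
              _ = Real.sqrt ((x 0 i)^2) := by rw [h6]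
              _ = x 0 i := Real.sqrt_sq (hxpos _ _).le
          · exact hne (by rwa [hinner_e] at h4)
        obtain ⟨hm0, hji⟩ := hxinj _ _ _ _ heqx
        refine ⟨hji, ?_⟩
        subst hji
        omega
      have hene : ee 0 i ≠ 0 := by
        intro h
        have h1 : ((ee 0 i : lp (fun _ : ℤ => EuclideanSpace ℂ (Fin k)) 2)
            : ∀ _ : ℤ, EuclideanSpace ℂ (Fin k)) 0 i = 1 := by
          rw [hee]
          show (lp.single (E := fun _ : ℤ => EuclideanSpace ℂ (Fin k)) 2 0
            (EuclideanSpace.single i (1:ℂ)) : ∀ _ : ℤ, EuclideanSpace ℂ (Fin k)) 0 i = 1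
          rw [BilShiftAux.lp_single_apply', if_pos rfl]
          simp [EuclideanSpace.single_apply]
        rw [h, lp.coeFn_zero] at h1
        exact one_ne_zero h1.symm
      have hfne : U (ee 0 i) ≠ 0 := by
        intro h
        apply hene
        have h1 : ContinuousLinearMap.adjoint U (U (ee 0 i)) = ee 0 i := by
          rw [← ContinuousLinearMap.mul_apply, hU1, ContinuousLinearMap.one_apply]
        rw [h, map_zero] at h1
        exact h1.symm
      have hex : ∃ (m : ℤ) (jj : Fin k), U (ee 0 i) m jj ≠ 0 := by
        by_contra hall
        push_neg at hall
        apply hfne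
        apply Subtype.ext
        funext m'
        ext jj
        simpa using hall m' jj
      obtain ⟨m, jj, hmj⟩ := hex
      obtain ⟨hji, hm⟩ := hcoord m jj hmj
      rw [hm, hji] at hmj
      intro h0
      exact hmj (by rw [h0]; simp)
end
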